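/- arXiv:1709.00589 — 2 statements merged into one kernel-verified Lean document; each statement's English description precedes it below -/
import Mathlib

section
/- If T is a tree of order n ≥ 10 and diameter n − 2, then θ_3(T) ≤ 2. -/
namespace AscPaper

open SimpleGraph

/-- The eccentricity of a vertex `u` in a graph `G`, as an extended natural number:
the supremum of distances from `u` to all vertices. -/
noncomputable def ecc {V : Type*} (G : SimpleGraph V) (u : V) : ℕ∞ :=
  ⨆ v, G.edist u v

/-- The radius of a graph: the minimum eccentricity over all vertices. -/
noncomputable def graphRadius {V : Type*} (G : SimpleGraph V) : ℕ∞ :=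
  ⨅ u, ecc G u

/-- The diameter of a graph: the maximum eccentricity over all vertices. -/
noncomputable def graphDiam {V : Type*} (G : SimpleGraph V) : ℕ∞ :=
  ⨆ u, ecc G u

/-- The eccentric set of `u`: all vertices at distance exactly `ecc G u` from `u`. -/
def eccSet {V : Type*} (G : SimpleGraph V) (u : V) : Set V :=
  {v | G.edist u v = ecc G u}

/-- `H` is an `r`-ASC (almost self-centered) graph: `H` is connected, has radius `r`,
and all but exactly two vertices are central (have eccentricity equal to the radius). -/
def IsASC {V : Type*} (r : ℕ) (H : SimpleGraph V) : Prop :=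
  H.Connected ∧ graphRadius H = (r : ℕ∞) ∧
    {u : V | ecc H u ≠ graphRadius H}.ncard = 2

/-- The `r`-ASC index of a graph `G`: the minimum number `k` of vertices that need to be
added to `G` so that the resulting graph is an `r`-ASC graph containing `G` as an
induced subgraph. -/
noncomputable def theta {V : Type*} (r : ℕ) (G : SimpleGraph V) : ℕ :=
  sInf {k : ℕ | ∃ H : SimpleGraph (V ⊕ Fin k), IsASC r H ∧
    ∀ u v : V, H.Adj (Sum.inl u) (Sum.inl v) ↔ G.Adj u v}

/- ### Auxiliary machinery -/

private lemma walk_potential {W : Type*} {G : SimpleGraph W} {φ : W → ℕ}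
    (hφ : ∀ a b, G.Adj a b → φ a ≤ φ b + 1) {u v : W} (p : G.Walk u v) :
    φ u ≤ φ v + p.length := by
  induction p with
  | nil => simp
  | cons h p ih =>
    simp only [SimpleGraph.Walk.length_cons]
    have := hφ _ _ h
    omega

private lemma le_edist_of_potential {W : Type*} {G : SimpleGraph W} {φ : W → ℕ}
    (hφ : ∀ a b, G.Adj a b → φ a ≤ φ b + 1) {u v : W} {k : ℕ}
    (hk : φ v + k ≤ φ u) : (k : ℕ∞) ≤ G.edist u v := by
  rw [SimpleGraph.edist_eq_sInf]
  refine le_sInf ?_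
  rintro x ⟨p, rfl⟩
  have := walk_potential hφ p
  exact Nat.cast_le.mpr (by omega)

private lemma edist_le_one' {W : Type*} {G : SimpleGraph W} {u v : W} (h : G.Adj u v) :
    G.edist u v ≤ 1 := by
  simpa using SimpleGraph.edist_le h.toWalk

private lemma edist_le_two' {W : Type*} {G : SimpleGraph W} {u v w : W} (h : G.Adj u v)
    (h' : G.Adj v w) : G.edist u w ≤ 2 := by
  calc G.edist u w ≤ G.edist u v + G.edist v w := SimpleGraph.edist_triangle
  _ ≤ 1 + 1 := add_le_add (edist_le_one' h) (edist_le_one' h')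
  _ = 2 := by norm_num

private lemma edist_le_three' {W : Type*} {G : SimpleGraph W} {u v w x : W} (h : G.Adj u v)
    (h' : G.Adj v w) (h'' : G.Adj w x) : G.edist u x ≤ 3 := by
  calc G.edist u x ≤ G.edist u v + G.edist v x := SimpleGraph.edist_triangle
  _ ≤ 1 + 2 := add_le_add (edist_le_one' h) (edist_le_two' h' h'')
  _ = 3 := by norm_num

private lemma edist_comp3 {W : Type*} {G : SimpleGraph W} {u v w : W} (h : G.Adj u v)
    (h' : G.edist v w ≤ 2) : G.edist u w ≤ 3 := by
  calc G.edist u w ≤ G.edist u v + G.edist v w := SimpleGraph.edist_triangle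
  _ ≤ 1 + 2 := add_le_add (edist_le_one' h) h'
  _ = 3 := by norm_num

private lemma edist_comp3' {W : Type*} {G : SimpleGraph W} {u v w : W} (h : G.edist u v ≤ 2)
    (h' : G.Adj v w) : G.edist u w ≤ 3 := by
  calc G.edist u w ≤ G.edist u v + G.edist v w := SimpleGraph.edist_triangle
  _ ≤ 2 + 1 := add_le_add h (edist_le_one' h')
  _ = 3 := by norm_num

private lemma weaken23 {W : Type*} {G : SimpleGraph W} {u v : W} (h : G.edist u v ≤ 2) :
    G.edist u v ≤ 3 := le_trans h (by norm_num)

private lemma weaken13 {W : Type*} {G : SimpleGraph W} {u v : W} (h : G.Adj u v) :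
    G.edist u v ≤ 3 := le_trans (edist_le_one' h) (by norm_num)

/- ### The added-two-vertices graph -/

private def inA (s c : ℕ) : Prop := ¬(s ≤ c ∧ c ≤ s + 2)
private def inB (s c : ℕ) : Prop := ¬((s + 1 ≤ c ∧ c ≤ s + 3) ∨ c = s + 5)

private def mkH {V : Type*} (T : SimpleGraph V) (f : V → ℕ) (s : ℕ) :
    SimpleGraph (V ⊕ Fin 2) where
  Adj p q :=
    match p, q with
    | Sum.inl u, Sum.inl v => T.Adj u v
    | Sum.inl u, Sum.inr i => if i = 0 then inA s (f u) else inB s (f u)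
    | Sum.inr i, Sum.inl v => if i = 0 then inA s (f v) else inB s (f v)
    | Sum.inr i, Sum.inr j => i ≠ j
  symm := by
    constructor
    rintro (u | i) (v | j) h
    · exact h.symm
    · exact h
    · exact h
    · exact Ne.symm h
  loopless := by
    constructor
    rintro (u | i) h
    · exact T.loopless.irrefl u h
    · exact h rfl

section mkHlemmas

variable {V : Type*} {T : SimpleGraph V} {f : V → ℕ} {s : ℕ} {u v : V} {i j : Fin 2}

private lemma mkH_adj_ll : (mkH T f s).Adj (Sum.inl u) (Sum.inl v) ↔ T.Adj u v := Iff.rfl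

private lemma mkH_adj_lx : (mkH T f s).Adj (Sum.inl v) (Sum.inr 0) ↔ ¬(s ≤ f v ∧ f v ≤ s + 2) := by
  show (if (0 : Fin 2) = 0 then inA s (f v) else inB s (f v)) ↔ _
  rw [if_pos rfl]; exact Iff.rfl

private lemma mkH_adj_ly : (mkH T f s).Adj (Sum.inl v) (Sum.inr 1) ↔
    ¬((s + 1 ≤ f v ∧ f v ≤ s + 3) ∨ f v = s + 5) := by
  show (if (1 : Fin 2) = 0 then inA s (f v) else inB s (f v)) ↔ _
  rw [if_neg (by decide)]; exact Iff.rfl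

private lemma mkH_adj_xl : (mkH T f s).Adj (Sum.inr 0) (Sum.inl v) ↔ ¬(s ≤ f v ∧ f v ≤ s + 2) := by
  show (if (0 : Fin 2) = 0 then inA s (f v) else inB s (f v)) ↔ _
  rw [if_pos rfl]; exact Iff.rfl

private lemma mkH_adj_yl : (mkH T f s).Adj (Sum.inr 1) (Sum.inl v) ↔
    ¬((s + 1 ≤ f v ∧ f v ≤ s + 3) ∨ f v = s + 5) := by
  show (if (1 : Fin 2) = 0 then inA s (f v) else inB s (f v)) ↔ _
  rw [if_neg (by decide)]; exact Iff.rfl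

private lemma mkH_adj_xy : (mkH T f s).Adj (Sum.inr 0) (Sum.inr 1) := by
  show (0 : Fin 2) ≠ 1
  decide

private lemma mkH_adj_rr : (mkH T f s).Adj (Sum.inr i) (Sum.inr j) ↔ i ≠ j := Iff.rfl

end mkHlemmas

/- ### Potential functions (class-based, for lower bounds on distances) -/

private def g1 (s c : ℕ) : ℕ :=
  if c + 2 ≤ s then 3 else if c + 1 = s then 2 else if c = s then 1
  else if c = s + 1 then 0 else if c = s + 2 then 1 else if c = s + 3 then 2
  else if c = s + 4 then 3 else if c = s + 5 then 4 else 3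

private def g2 (s c : ℕ) : ℕ :=
  if c + 1 ≤ s then 3 else if c = s then 2 else if c = s + 1 then 1
  else if c = s + 2 then 0 else if c = s + 3 then 1 else if c = s + 4 then 2 else 3

private def g5 (s c : ℕ) : ℕ :=
  if c + 1 ≤ s then 2 else if c = s then 3 else if c = s + 1 then 4
  else if c = s + 2 then 3 else if c = s + 3 then 2 else if c = s + 4 then 1
  else if c = s + 5 then 0 else if c = s + 6 then 1 else 2

private def g0 (s c : ℕ) : ℕ :=
  if c + 2 ≤ s then 2 else if c + 1 = s then 1 else if c = s then 0
  else if c = s + 1 then 1 else if c = s + 2 then 2 else if c = s + 3 then 3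
  else if c = s + 4 then 2 else if c = s + 5 then 3 else 2

private lemma g1_spec (s c : ℕ) :
    (c + 2 ≤ s ∧ g1 s c = 3) ∨ (c + 1 = s ∧ g1 s c = 2) ∨ (c = s ∧ g1 s c = 1) ∨
    (c = s + 1 ∧ g1 s c = 0) ∨ (c = s + 2 ∧ g1 s c = 1) ∨ (c = s + 3 ∧ g1 s c = 2) ∨
    (c = s + 4 ∧ g1 s c = 3) ∨ (c = s + 5 ∧ g1 s c = 4) ∨ (s + 6 ≤ c ∧ g1 s c = 3) := by
  unfold g1; split_ifs <;> omega

private lemma g2_spec (s c : ℕ) :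
    (c + 1 ≤ s ∧ g2 s c = 3) ∨ (c = s ∧ g2 s c = 2) ∨ (c = s + 1 ∧ g2 s c = 1) ∨
    (c = s + 2 ∧ g2 s c = 0) ∨ (c = s + 3 ∧ g2 s c = 1) ∨ (c = s + 4 ∧ g2 s c = 2) ∨
    (s + 5 ≤ c ∧ g2 s c = 3) := by
  unfold g2; split_ifs <;> omega

private lemma g5_spec (s c : ℕ) :
    (c + 1 ≤ s ∧ g5 s c = 2) ∨ (c = s ∧ g5 s c = 3) ∨ (c = s + 1 ∧ g5 s c = 4) ∨
    (c = s + 2 ∧ g5 s c = 3) ∨ (c = s + 3 ∧ g5 s c = 2) ∨ (c = s + 4 ∧ g5 s c = 1) ∨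
    (c = s + 5 ∧ g5 s c = 0) ∨ (c = s + 6 ∧ g5 s c = 1) ∨ (s + 7 ≤ c ∧ g5 s c = 2) := by
  unfold g5; split_ifs <;> omega

private lemma g0_spec (s c : ℕ) :
    (c + 2 ≤ s ∧ g0 s c = 2) ∨ (c + 1 = s ∧ g0 s c = 1) ∨ (c = s ∧ g0 s c = 0) ∨
    (c = s + 1 ∧ g0 s c = 1) ∨ (c = s + 2 ∧ g0 s c = 2) ∨ (c = s + 3 ∧ g0 s c = 3) ∨
    (c = s + 4 ∧ g0 s c = 2) ∨ (c = s + 5 ∧ g0 s c = 3) ∨ (s + 6 ≤ c ∧ g0 s c = 2) := by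
  unfold g0; split_ifs <;> omega

private lemma g1_lip {s c d : ℕ} (h1 : c ≤ d + 1) (h2 : d ≤ c + 1) : g1 s c ≤ g1 s d + 1 := by
  have := g1_spec s c; have := g1_spec s d; omega

private lemma g2_lip {s c d : ℕ} (h1 : c ≤ d + 1) (h2 : d ≤ c + 1) : g2 s c ≤ g2 s d + 1 := by
  have := g2_spec s c; have := g2_spec s d; omega

private lemma g5_lip {s c d : ℕ} (h1 : c ≤ d + 1) (h2 : d ≤ c + 1) : g5 s c ≤ g5 s d + 1 := by
  have := g5_spec s c; have := g5_spec s d; omega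

private lemma g0_lip {s c d : ℕ} (h1 : c ≤ d + 1) (h2 : d ≤ c + 1) : g0 s c ≤ g0 s d + 1 := by
  have := g0_spec s c; have := g0_spec s d; omega

private lemma g1_winA {s c : ℕ} (h : ¬(s ≤ c ∧ c ≤ s + 2)) : 2 ≤ g1 s c ∧ g1 s c ≤ 4 := by
  have := g1_spec s c; omega

private lemma g1_winB {s c : ℕ} (h : ¬((s + 1 ≤ c ∧ c ≤ s + 3) ∨ c = s + 5)) :
    1 ≤ g1 s c ∧ g1 s c ≤ 3 := by
  have := g1_spec s c; omega

private lemma g2_winA {s c : ℕ} (h : ¬(s ≤ c ∧ c ≤ s + 2)) : 1 ≤ g2 s c ∧ g2 s c ≤ 3 := by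
  have := g2_spec s c; omega

private lemma g2_winB {s c : ℕ} (h : ¬((s + 1 ≤ c ∧ c ≤ s + 3) ∨ c = s + 5)) :
    2 ≤ g2 s c ∧ g2 s c ≤ 4 := by
  have := g2_spec s c; omega

private lemma g5_winA {s c : ℕ} (h : ¬(s ≤ c ∧ c ≤ s + 2)) : g5 s c ≤ 2 := by
  have := g5_spec s c; omega

private lemma g5_winB {s c : ℕ} (h : ¬((s + 1 ≤ c ∧ c ≤ s + 3) ∨ c = s + 5)) :
    1 ≤ g5 s c ∧ g5 s c ≤ 3 := by
  have := g5_spec s c; omega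

private lemma g0_winA {s c : ℕ} (h : ¬(s ≤ c ∧ c ≤ s + 2)) : 1 ≤ g0 s c ∧ g0 s c ≤ 3 := by
  have := g0_spec s c; omega

private lemma g0_winB {s c : ℕ} (h : ¬((s + 1 ≤ c ∧ c ≤ s + 3) ∨ c = s + 5)) : g0 s c ≤ 2 := by
  have := g0_spec s c; omega


/- ### Main construction -/

private theorem main_construction {V : Type*} (T : SimpleGraph V) (f : V → ℕ) (s : ℕ)
    (hlip : ∀ u v : V, T.Adj u v → f u ≤ f v + 1)
    (hdesc : ∀ v : V, f v ≠ 0 → ∃ u, T.Adj v u ∧ f u + 1 = f v)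
    (hex : ∀ k, s ≤ k → k ≤ s + 5 → ∃ v : V, f v = k)
    (hsing0 : ∀ u v : V, f u = s → f v = s → u = v)
    (hsing1 : ∀ u v : V, f u = s + 1 → f v = s + 1 → u = v)
    (hsing2 : ∀ u v : V, f u = s + 2 → f v = s + 2 → u = v)
    (hsing5 : ∀ u v : V, f u = s + 5 → f v = s + 5 → u = v) :
    ∃ H : SimpleGraph (V ⊕ Fin 2), IsASC 3 H ∧
      ∀ u v : V, H.Adj (Sum.inl u) (Sum.inl v) ↔ T.Adj u v := by
  classical
  set H : SimpleGraph (V ⊕ Fin 2) := mkH T f s with hH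
  have fin2 : ∀ i : Fin 2, i = 0 ∨ i = 1 := by decide
  -- adjacency helpers
  have adjT : ∀ {u v : V}, T.Adj u v → H.Adj (Sum.inl u) (Sum.inl v) := fun h => mkH_adj_ll.mpr h
  have adjXv : ∀ v : V, ¬(s ≤ f v ∧ f v ≤ s + 2) → H.Adj (Sum.inr 0) (Sum.inl v) :=
    fun v h => mkH_adj_xl.mpr h
  have adjvX : ∀ v : V, ¬(s ≤ f v ∧ f v ≤ s + 2) → H.Adj (Sum.inl v) (Sum.inr 0) :=
    fun v h => mkH_adj_lx.mpr h
  have adjYv : ∀ v : V, ¬((s + 1 ≤ f v ∧ f v ≤ s + 3) ∨ f v = s + 5) →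
      H.Adj (Sum.inr 1) (Sum.inl v) := fun v h => mkH_adj_yl.mpr h
  have adjvY : ∀ v : V, ¬((s + 1 ≤ f v ∧ f v ≤ s + 3) ∨ f v = s + 5) →
      H.Adj (Sum.inl v) (Sum.inr 1) := fun v h => mkH_adj_ly.mpr h
  have adjXY : H.Adj (Sum.inr 0) (Sum.inr 1) := mkH_adj_xy
  -- named vertices
  obtain ⟨zs, hzs⟩ := hex s le_rfl (by omega)
  obtain ⟨p1, hp1⟩ := hex (s + 1) (by omega) (by omega)
  obtain ⟨p2, hp2⟩ := hex (s + 2) (by omega) (by omega)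
  obtain ⟨p3, hp3⟩ := hex (s + 3) (by omega) (by omega)
  obtain ⟨p5, hp5⟩ := hex (s + 5) (by omega) (by omega)
  have cls0 : ∀ v : V, f v = s → v = zs := fun v h => hsing0 v zs h hzs
  have cls1 : ∀ v : V, f v = s + 1 → v = p1 := fun v h => hsing1 v p1 h hp1
  have cls2 : ∀ v : V, f v = s + 2 → v = p2 := fun v h => hsing2 v p2 h hp2
  have cls5 : ∀ v : V, f v = s + 5 → v = p5 := fun v h => hsing5 v p5 h hp5
  -- descent adjacencies
  have a10 : T.Adj p1 zs := by
    obtain ⟨u, hu, he⟩ := hdesc p1 (by omega)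
    have : u = zs := cls0 u (by omega)
    rwa [this] at hu
  have a21 : T.Adj p2 p1 := by
    obtain ⟨u, hu, he⟩ := hdesc p2 (by omega)
    have : u = p1 := cls1 u (by omega)
    rwa [this] at hu
  have a32 : T.Adj p3 p2 := by
    obtain ⟨u, hu, he⟩ := hdesc p3 (by omega)
    have : u = p2 := cls2 u (by omega)
    rwa [this] at hu
  obtain ⟨p4, a54, hp4⟩ : ∃ u, T.Adj p5 u ∧ f u = s + 4 := by
    obtain ⟨u, hu, he⟩ := hdesc p5 (by omega)
    exact ⟨u, hu, by omega⟩
  have desc3 : ∀ v : V, f v = s + 3 → T.Adj v p2 := by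
    intro v hv
    obtain ⟨u, hu, he⟩ := hdesc v (by omega)
    have : u = p2 := cls2 u (by omega)
    rwa [this] at hu
  -- upper bounds: hub to vertices
  have dX2 : ∀ v : V, f v ≠ s + 1 → H.edist (Sum.inr 0) (Sum.inl v) ≤ 2 := by
    intro v hv
    by_cases hA : ¬(s ≤ f v ∧ f v ≤ s + 2)
    · exact le_trans (edist_le_one' (adjXv v hA)) (by norm_num)
    · by_cases hs0 : f v = s
      · exact edist_le_two' adjXY (adjYv v (by omega))
      · have hv2 : f v = s + 2 := by omega
        rw [cls2 v hv2]
        exact edist_le_two' (adjXv p3 (by omega)) (adjT a32)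
  have dX3 : ∀ v : V, H.edist (Sum.inr 0) (Sum.inl v) ≤ 3 := by
    intro v
    by_cases hv : f v = s + 1
    · rw [cls1 v hv]
      exact edist_le_three' adjXY (adjYv zs (by omega)) (adjT a10.symm)
    · exact weaken23 (dX2 v hv)
  have dY2 : ∀ v : V, f v ≠ s + 2 → H.edist (Sum.inr 1) (Sum.inl v) ≤ 2 := by
    intro v hv
    by_cases hB : ¬((s + 1 ≤ f v ∧ f v ≤ s + 3) ∨ f v = s + 5)
    · exact le_trans (edist_le_one' (adjYv v hB)) (by norm_num)
    · by_cases h1 : f v = s + 1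
      · rw [cls1 v h1]
        exact edist_le_two' (adjYv zs (by omega)) (adjT a10.symm)
      · -- f v = s+3 or s+5 : v ∈ A
        exact edist_le_two' adjXY.symm (adjXv v (by omega))
  have dY3 : ∀ v : V, H.edist (Sum.inr 1) (Sum.inl v) ≤ 3 := by
    intro v
    by_cases hv : f v = s + 2
    · rw [cls2 v hv]
      exact edist_le_three' adjXY.symm (adjXv p3 (by omega)) (adjT a32)
    · exact weaken23 (dY2 v hv)
  -- upper bounds: vertex-vertex
  have dVV : ∀ u v : V, ¬(f u = s + 1 ∧ f v = s + 5) → ¬(f u = s + 5 ∧ f v = s + 1) →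
      H.edist (Sum.inl u) (Sum.inl v) ≤ 3 := by
    intro u v h15 h51
    by_cases hv1 : f v = s + 1
    · rw [cls1 v hv1]
      by_cases hu0 : f u = s
      · rw [cls0 u hu0]; exact weaken13 (adjT a10.symm)
      by_cases hu1 : f u = s + 1
      · rw [cls1 u hu1]; simp [SimpleGraph.edist_self]
      by_cases hu2 : f u = s + 2
      · rw [cls2 u hu2]; exact weaken13 (adjT a21)
      by_cases hu3 : f u = s + 3
      · exact edist_le_two' (adjT (desc3 u hu3)) (adjT a21) |> weaken23
      · -- u ∈ B
        have hu5 : f u ≠ s + 5 := fun h => h51 ⟨h, hv1⟩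
        exact edist_comp3 (adjvY u (by omega)) (dY2 p1 (by omega))
    by_cases hv5 : f v = s + 5
    · rw [cls5 v hv5]
      by_cases hu1 : f u = s + 1
      · exact absurd ⟨hu1, hv5⟩ h15
      by_cases hu5 : f u = s + 5
      · rw [cls5 u hu5]; simp [SimpleGraph.edist_self]
      by_cases hu0 : f u = s
      · rw [cls0 u hu0]
        exact edist_le_three' (adjvY zs (by omega)).symm.symm
          (adjYv p4 (by omega)).symm.symm (adjT a54.symm)
      by_cases hu2 : f u = s + 2
      · rw [cls2 u hu2]
        exact edist_le_three' (adjT a32.symm) (adjvX p3 (by omega)) (adjXv p5 (by omega))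
      · -- u ∈ A
        exact weaken23 (edist_le_two' (adjvX u (by omega)) (adjXv p5 (by omega)))
    by_cases hv2 : f v = s + 2
    · rw [cls2 v hv2]
      by_cases hu0 : f u = s
      · rw [cls0 u hu0]; exact weaken23 (edist_le_two' (adjT a10.symm) (adjT a21.symm))
      by_cases hu1 : f u = s + 1
      · rw [cls1 u hu1]; exact weaken13 (adjT a21.symm)
      by_cases hu2 : f u = s + 2
      · rw [cls2 u hu2]; simp [SimpleGraph.edist_self]
      by_cases hu3 : f u = s + 3
      · exact weaken13 (adjT (desc3 u hu3))
      · -- u ∈ A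
        exact edist_comp3 (adjvX u (by omega)) (dX2 p2 (by omega))
    by_cases hv0 : f v = s
    · rw [cls0 v hv0]
      by_cases hu0 : f u = s
      · rw [cls0 u hu0]; simp [SimpleGraph.edist_self]
      by_cases hu1 : f u = s + 1
      · rw [cls1 u hu1]; exact weaken13 (adjT a10)
      by_cases hu2 : f u = s + 2
      · rw [cls2 u hu2]; exact weaken23 (edist_le_two' (adjT a21) (adjT a10))
      by_cases hu3 : f u = s + 3
      · exact edist_le_three' (adjT (desc3 u hu3)) (adjT a21) (adjT a10)
      by_cases hu5 : f u = s + 5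
      · rw [cls5 u hu5]
        exact edist_le_three' (adjT a54) (adjvY p4 (by omega)) (adjYv zs (by omega))
      · -- u ∈ B
        exact edist_comp3 (adjvY u (by omega)) (dY2 zs (by omega))
    · -- v ∈ A
      by_cases hu1 : f u = s + 1
      · rw [cls1 u hu1]
        by_cases hv3 : f v = s + 3
        · exact weaken23 (edist_le_two' (adjT a21.symm) (adjT (desc3 v hv3).symm))
        · -- v ∈ B as well
          exact edist_le_three' (adjT a10) (adjvY zs (by omega)) (adjYv v (by omega))
      · calc H.edist (Sum.inl u) (Sum.inl v) ≤
            H.edist (Sum.inl u) (Sum.inr 0) + H.edist (Sum.inr 0) (Sum.inl v) :=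
              SimpleGraph.edist_triangle
        _ ≤ 2 + 1 := add_le_add (SimpleGraph.edist_comm ▸ dX2 u hu1)
              (edist_le_one' (adjXv v (by omega)))
        _ = 3 := by norm_num
  -- potentials
  set Phi1 : V ⊕ Fin 2 → ℕ :=
    Sum.elim (fun v => g1 s (f v)) (fun i : Fin 2 => 3 - i.val) with hPhi1def
  have hPhi1 : ∀ p q : V ⊕ Fin 2, H.Adj p q → Phi1 p ≤ Phi1 q + 1 := by
    rintro (u | i) (v | j) h
    · exact g1_lip (hlip u v (mkH_adj_ll.mp h)) (hlip v u (mkH_adj_ll.mp h).symm)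
    · rcases fin2 j with rfl | rfl
      · have hA := mkH_adj_lx.mp h
        simp only [hPhi1def, Sum.elim_inl, Sum.elim_inr, Fin.val_zero]
        have := g1_winA hA; omega
      · have hB := mkH_adj_ly.mp h
        simp only [hPhi1def, Sum.elim_inl, Sum.elim_inr, Fin.val_one]
        have := g1_winB hB; omega
    · rcases fin2 i with rfl | rfl
      · have hA := mkH_adj_xl.mp h
        simp only [hPhi1def, Sum.elim_inl, Sum.elim_inr, Fin.val_zero]
        have := g1_winA hA; omega
      · have hB := mkH_adj_yl.mp h
        simp only [hPhi1def, Sum.elim_inl, Sum.elim_inr, Fin.val_one]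
        have := g1_winB hB; omega
    · simp only [hPhi1def, Sum.elim_inr]
      have := i.2; have := j.2; omega
  set Phi2 : V ⊕ Fin 2 → ℕ :=
    Sum.elim (fun v => g2 s (f v)) (fun i : Fin 2 => 2 + i.val) with hPhi2def
  have hPhi2 : ∀ p q : V ⊕ Fin 2, H.Adj p q → Phi2 p ≤ Phi2 q + 1 := by
    rintro (u | i) (v | j) h
    · exact g2_lip (hlip u v (mkH_adj_ll.mp h)) (hlip v u (mkH_adj_ll.mp h).symm)
    · rcases fin2 j with rfl | rfl
      · have hA := mkH_adj_lx.mp h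
        simp only [hPhi2def, Sum.elim_inl, Sum.elim_inr, Fin.val_zero]
        have := g2_winA hA; omega
      · have hB := mkH_adj_ly.mp h
        simp only [hPhi2def, Sum.elim_inl, Sum.elim_inr, Fin.val_one]
        have := g2_winB hB; omega
    · rcases fin2 i with rfl | rfl
      · have hA := mkH_adj_xl.mp h
        simp only [hPhi2def, Sum.elim_inl, Sum.elim_inr, Fin.val_zero]
        have := g2_winA hA; omega
      · have hB := mkH_adj_yl.mp h
        simp only [hPhi2def, Sum.elim_inl, Sum.elim_inr, Fin.val_one]
        have := g2_winB hB; omega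
    · simp only [hPhi2def, Sum.elim_inr]
      have := i.2; have := j.2; omega
  set Phi5 : V ⊕ Fin 2 → ℕ :=
    Sum.elim (fun v => g5 s (f v)) (fun i : Fin 2 => 1 + i.val) with hPhi5def
  have hPhi5 : ∀ p q : V ⊕ Fin 2, H.Adj p q → Phi5 p ≤ Phi5 q + 1 := by
    rintro (u | i) (v | j) h
    · exact g5_lip (hlip u v (mkH_adj_ll.mp h)) (hlip v u (mkH_adj_ll.mp h).symm)
    · rcases fin2 j with rfl | rfl
      · have hA := mkH_adj_lx.mp h
        simp only [hPhi5def, Sum.elim_inl, Sum.elim_inr, Fin.val_zero]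
        have := g5_winA hA; omega
      · have hB := mkH_adj_ly.mp h
        simp only [hPhi5def, Sum.elim_inl, Sum.elim_inr, Fin.val_one]
        have := g5_winB hB; omega
    · rcases fin2 i with rfl | rfl
      · have hA := mkH_adj_xl.mp h
        simp only [hPhi5def, Sum.elim_inl, Sum.elim_inr, Fin.val_zero]
        have := g5_winA hA; omega
      · have hB := mkH_adj_yl.mp h
        simp only [hPhi5def, Sum.elim_inl, Sum.elim_inr, Fin.val_one]
        have := g5_winB hB; omega
    · simp only [hPhi5def, Sum.elim_inr]
      have := i.2; have := j.2; omega
  set Phi0 : V ⊕ Fin 2 → ℕ :=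
    Sum.elim (fun v => g0 s (f v)) (fun i : Fin 2 => 2 - i.val) with hPhi0def
  have hPhi0 : ∀ p q : V ⊕ Fin 2, H.Adj p q → Phi0 p ≤ Phi0 q + 1 := by
    rintro (u | i) (v | j) h
    · exact g0_lip (hlip u v (mkH_adj_ll.mp h)) (hlip v u (mkH_adj_ll.mp h).symm)
    · rcases fin2 j with rfl | rfl
      · have hA := mkH_adj_lx.mp h
        simp only [hPhi0def, Sum.elim_inl, Sum.elim_inr, Fin.val_zero]
        have := g0_winA hA; omega
      · have hB := mkH_adj_ly.mp h
        simp only [hPhi0def, Sum.elim_inl, Sum.elim_inr, Fin.val_one]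
        have := g0_winB hB; omega
    · rcases fin2 i with rfl | rfl
      · have hA := mkH_adj_xl.mp h
        simp only [hPhi0def, Sum.elim_inl, Sum.elim_inr, Fin.val_zero]
        have := g0_winA hA; omega
      · have hB := mkH_adj_yl.mp h
        simp only [hPhi0def, Sum.elim_inl, Sum.elim_inr, Fin.val_one]
        have := g0_winB hB; omega
    · simp only [hPhi0def, Sum.elim_inr]
      have := i.2; have := j.2; omega
  -- key lower bounds
  have spec15 : (4 : ℕ∞) ≤ H.edist (Sum.inl p1) (Sum.inl p5) := by
    apply le_edist_of_potential hPhi5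
    simp only [hPhi5def, Sum.elim_inl]
    rw [hp1, hp5]
    have := g5_spec s (s + 1); have := g5_spec s (s + 5); omega
  have spec51 : (4 : ℕ∞) ≤ H.edist (Sum.inl p5) (Sum.inl p1) := by
    apply le_edist_of_potential hPhi1
    simp only [hPhi1def, Sum.elim_inl]
    rw [hp1, hp5]
    have := g1_spec s (s + 1); have := g1_spec s (s + 5); omega
  -- eccentricity lower bounds
  have ecc_ge3 : ∀ p : V ⊕ Fin 2, (3 : ℕ∞) ≤ ecc H p := by
    have key : ∀ (p q : V ⊕ Fin 2), (3 : ℕ∞) ≤ H.edist p q → (3 : ℕ∞) ≤ ecc H p :=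
      fun p q h => le_trans h (le_iSup (fun w => H.edist p w) q)
    rintro (v | i)
    · by_cases h0 : f v + 2 ≤ s
      · refine key _ (Sum.inl p1) (le_edist_of_potential hPhi1 ?_)
        simp only [hPhi1def, Sum.elim_inl]; rw [hp1]
        have := g1_spec s (s + 1); have := g1_spec s (f v); omega
      by_cases h1 : f v + 1 = s
      · refine key _ (Sum.inl p2) (le_edist_of_potential hPhi2 ?_)
        simp only [hPhi2def, Sum.elim_inl]; rw [hp2]
        have := g2_spec s (s + 2); have := g2_spec s (f v); omega
      by_cases h2 : f v ≤ s + 2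
      · -- f v ∈ {s, s+1, s+2}
        refine key _ (Sum.inl p5) (le_edist_of_potential hPhi5 ?_)
        simp only [hPhi5def, Sum.elim_inl]; rw [hp5]
        have := g5_spec s (s + 5); have := g5_spec s (f v); omega
      by_cases h3 : f v = s + 3
      · refine key _ (Sum.inl zs) (le_edist_of_potential hPhi0 ?_)
        simp only [hPhi0def, Sum.elim_inl]; rw [hzs]
        have := g0_spec s s; have := g0_spec s (f v); omega
      · -- f v ≥ s + 4
        refine key _ (Sum.inl p1) (le_edist_of_potential hPhi1 ?_)
        simp only [hPhi1def, Sum.elim_inl]; rw [hp1]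
        have := g1_spec s (s + 1); have := g1_spec s (f v); omega
    · rcases fin2 i with rfl | rfl
      · refine key _ (Sum.inl p1) (le_edist_of_potential hPhi1 ?_)
        simp only [hPhi1def, Sum.elim_inl, Sum.elim_inr, Fin.val_zero]; rw [hp1]
        have := g1_spec s (s + 1); omega
      · refine key _ (Sum.inl p2) (le_edist_of_potential hPhi2 ?_)
        simp only [hPhi2def, Sum.elim_inl, Sum.elim_inr, Fin.val_one]; rw [hp2]
        have := g2_spec s (s + 2); omega
  -- eccentricity upper bounds
  have eccX_le : ecc H (Sum.inr 0) ≤ 3 := by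
    refine iSup_le ?_
    rintro (v | i)
    · exact dX3 v
    · rcases fin2 i with rfl | rfl
      · simp [SimpleGraph.edist_self]
      · exact weaken13 adjXY
  have eccY_le : ecc H (Sum.inr 1) ≤ 3 := by
    refine iSup_le ?_
    rintro (v | i)
    · exact dY3 v
    · rcases fin2 i with rfl | rfl
      · exact weaken13 adjXY.symm
      · simp [SimpleGraph.edist_self]
  have eccV_le : ∀ v : V, f v ≠ s + 1 → f v ≠ s + 5 → ecc H (Sum.inl v) ≤ 3 := by
    intro v h1 h5
    refine iSup_le ?_
    rintro (w | i)
    · exact dVV v w (fun h => h1 h.1) (fun h => h5 h.1)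
    · rcases fin2 i with rfl | rfl
      · rw [SimpleGraph.edist_comm]; exact dX3 v
      · rw [SimpleGraph.edist_comm]; exact dY3 v
  -- radius
  have hrad : graphRadius H = (3 : ℕ∞) := by
    refine le_antisymm ?_ (le_iInf ecc_ge3)
    exact le_trans (iInf_le (fun u => ecc H u) (Sum.inr 0)) (le_antisymm eccX_le (ecc_ge3 _)).le
  -- connectivity
  have hreach : ∀ p : V ⊕ Fin 2, H.Reachable p (Sum.inr 0) := by
    intro p
    apply SimpleGraph.reachable_of_edist_ne_top
    have hle : H.edist p (Sum.inr 0) ≤ 3 := by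
      rcases p with v | i
      · rw [SimpleGraph.edist_comm]; exact dX3 v
      · rcases fin2 i with rfl | rfl
        · simp [SimpleGraph.edist_self]
        · exact weaken13 adjXY.symm
    intro htop
    rw [htop] at hle
    exact absurd hle (by norm_num)
  have hcon : H.Connected :=
    (SimpleGraph.connected_iff_exists_forall_reachable H).mpr
      ⟨Sum.inr 0, fun w => (hreach w).symm⟩
  -- the two non-central vertices
  have ecc1_ge4 : (4 : ℕ∞) ≤ ecc H (Sum.inl p1) :=
    le_trans spec15 (le_iSup (fun w => H.edist (Sum.inl p1) w) (Sum.inl p5))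
  have ecc5_ge4 : (4 : ℕ∞) ≤ ecc H (Sum.inl p5) :=
    le_trans spec51 (le_iSup (fun w => H.edist (Sum.inl p5) w) (Sum.inl p1))
  have hseteq : {u : V ⊕ Fin 2 | ecc H u ≠ graphRadius H} =
      {Sum.inl p1, Sum.inl p5} := by
    rw [hrad]
    ext p
    simp only [Set.mem_setOf_eq, Set.mem_insert_iff, Set.mem_singleton_iff]
    constructor
    · intro hp
      rcases p with v | i
      · by_contra hc
        push_neg at hc
        have h1 : f v ≠ s + 1 := fun h => hc.1 (by rw [cls1 v h])
        have h5 : f v ≠ s + 5 := fun h => hc.2 (by rw [cls5 v h])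
        exact hp (le_antisymm (eccV_le v h1 h5) (ecc_ge3 _))
      · exfalso
        rcases fin2 i with rfl | rfl
        · exact hp (le_antisymm eccX_le (ecc_ge3 _))
        · exact hp (le_antisymm eccY_le (ecc_ge3 _))
    · rintro (rfl | rfl)
      · intro h
        rw [h] at ecc1_ge4
        exact absurd ecc1_ge4 (by norm_num)
      · intro h
        rw [h] at ecc5_ge4
        exact absurd ecc5_ge4 (by norm_num)
  have hne15 : (Sum.inl p1 : V ⊕ Fin 2) ≠ Sum.inl p5 := by
    intro h
    have h' : p1 = p5 := Sum.inl.inj h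
    rw [h', hp5] at hp1
    omega
  refine ⟨H, ⟨hcon, ?_, ?_⟩, fun u v => Iff.rfl⟩
  · rw [hrad]; norm_num
  · rw [hseteq]
    exact Set.ncard_pair hne15

/-- If `T` is a tree of order `n ≥ 10` and diameter `n − 2`, then `θ_3(T) ≤ 2`. -/
theorem theta_three_tree_le {V : Type*} [Fintype V] (T : SimpleGraph V) (n : ℕ)
    (hcard : Fintype.card V = n) (hn : 10 ≤ n)
    (hconn : T.Connected) (hacyclic : T.IsAcyclic)
    (hdiam : graphDiam T = ((n - 2 : ℕ) : ℕ∞)) :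
    theta 3 T ≤ 2 := by
  classical
  set m : ℕ := n - 2 with hmdef
  have hm8 : 8 ≤ m := by omega
  have hNV : Nonempty V := by
    have : 0 < Fintype.card V := by omega
    exact Fintype.card_pos_iff.mp this
  have hedle : ∀ u v : V, T.edist u v ≤ (m : ℕ∞) := by
    intro u v
    calc T.edist u v ≤ ecc T u := le_iSup (fun w => T.edist u w) v
    _ ≤ graphDiam T := le_iSup (fun w => ecc T w) u
    _ = (m : ℕ∞) := hdiam
  obtain ⟨a, ha⟩ := Finite.exists_max (fun u : V => ecc T u)
  have hecca : ecc T a = (m : ℕ∞) := by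
    refine le_antisymm ?_ ?_
    · calc ecc T a ≤ graphDiam T := le_iSup (fun w => ecc T w) a
      _ = (m : ℕ∞) := hdiam
    · rw [← hdiam]
      exact iSup_le ha
  obtain ⟨b, hb⟩ := Finite.exists_max (fun v : V => T.edist a v)
  have heb : T.edist a b = (m : ℕ∞) := by
    refine le_antisymm (hedle a b) ?_
    rw [← hecca]
    exact iSup_le hb
  set f : V → ℕ := fun v => T.dist a v with hfdef
  have hfcast : ∀ v : V, (f v : ℕ∞) = T.edist a v := by
    intro v
    have hne : T.edist a v ≠ ⊤ := (SimpleGraph.edist_ne_top_iff_reachable).mpr (hconn a v)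
    exact ENat.coe_toNat hne
  have hfb : f b = m := by
    have h1 := hfcast b
    rw [heb] at h1
    exact_mod_cast h1
  have hfle : ∀ v : V, f v ≤ m := by
    intro v
    have h1 := hfcast v
    have h2 := hedle a v
    rw [← h1] at h2
    exact_mod_cast h2
  have hlip : ∀ u v : V, T.Adj u v → f u ≤ f v + 1 := by
    intro u v h
    have h1 : T.dist a u ≤ T.dist a v + T.dist v u := hconn.dist_triangle
    have h2 : T.dist v u = 1 := SimpleGraph.dist_eq_one_iff_adj.mpr h.symm
    simp only [hfdef]
    omega
  have hdesc : ∀ v : V, f v ≠ 0 → ∃ u, T.Adj v u ∧ f u + 1 = f v := by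
    intro v hv
    obtain ⟨p, hp⟩ := (hconn v a).exists_walk_length_eq_dist
    cases p with
    | nil =>
      exact absurd (show f a = 0 from SimpleGraph.dist_self) hv
    | cons hadj q =>
      rename_i w
      refine ⟨w, hadj, ?_⟩
      have hq : T.dist a w ≤ q.length := by
        rw [SimpleGraph.dist_comm]
        exact SimpleGraph.dist_le q
      have hl : T.dist v a = q.length + 1 := by
        rw [← hp]
        simp [SimpleGraph.Walk.length_cons]
      have h2 := hlip v w hadj
      have hc : T.dist a v = T.dist v a := SimpleGraph.dist_comm
      show T.dist a w + 1 = T.dist a v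
      have h2' : T.dist a v ≤ T.dist a w + 1 := h2
      omega
  have hex : ∀ k, k ≤ m → ∃ v : V, f v = k := by
    have haux : ∀ i, i ≤ m → ∃ v : V, f v = m - i := by
      intro i
      induction i with
      | zero => intro _; exact ⟨b, by simpa using hfb⟩
      | succ j ih =>
        intro hj
        obtain ⟨v, hv⟩ := ih (by omega)
        obtain ⟨u, _, hu⟩ := hdesc v (by omega)
        exact ⟨u, by omega⟩
    intro k hk
    obtain ⟨v, hv⟩ := haux (m - k) (by omega)
    exact ⟨v, by omega⟩
  have key : ∀ c1 c2 : ℕ, c1 ≤ m → c2 ≤ m → c1 ≠ c2 →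
      ¬(∀ u v : V, f u = c1 → f v = c1 → u = v) →
      ¬(∀ u v : V, f u = c2 → f v = c2 → u = v) → False := by
    intro c1 c2 h1 h2 hne hs1 hs2
    push_neg at hs1 hs2
    obtain ⟨u1, v1, hu1, hv1, hne1⟩ := hs1
    obtain ⟨u2, v2, hu2, hv2, hne2⟩ := hs2
    have hfib : ∀ w : V, w ∈ Finset.univ → f w ∈ Finset.range (m + 1) :=
      fun w _ => Finset.mem_range.mpr (by have := hfle w; omega)
    have hsum : (Finset.univ : Finset V).card =
        ∑ c ∈ Finset.range (m + 1), (Finset.univ.filter (fun w : V => f w = c)).card :=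
      Finset.card_eq_sum_card_fiberwise hfib
    have hsub : ({c1, c2} : Finset ℕ) ⊆ Finset.range (m + 1) := by
      intro c hc
      simp only [Finset.mem_insert, Finset.mem_singleton] at hc
      rcases hc with rfl | rfl <;> exact Finset.mem_range.mpr (by omega)
    have hcard2 : ∀ (c : ℕ) (x y : V), x ≠ y → f x = c → f y = c →
        2 ≤ (Finset.univ.filter (fun w : V => f w = c)).card := by
      intro c x y hxy hx hy
      exact Finset.one_lt_card.mpr ⟨x, by simp [hx], y, by simp [hy], hxy⟩
    have hone : ∀ c ∈ Finset.range (m + 1) \ ({c1, c2} : Finset ℕ),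
        1 ≤ (Finset.univ.filter (fun w : V => f w = c)).card := by
      intro c hc
      rw [Finset.mem_sdiff, Finset.mem_range] at hc
      obtain ⟨v, hv⟩ := hex c (by omega)
      exact Finset.card_pos.mpr ⟨v, by simp [hv]⟩
    have hsplit : ∑ c ∈ Finset.range (m + 1) \ ({c1, c2} : Finset ℕ),
        (Finset.univ.filter (fun w : V => f w = c)).card +
        ∑ c ∈ ({c1, c2} : Finset ℕ), (Finset.univ.filter (fun w : V => f w = c)).card =
        ∑ c ∈ Finset.range (m + 1), (Finset.univ.filter (fun w : V => f w = c)).card :=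
      Finset.sum_sdiff hsub
    have hpair : ∑ c ∈ ({c1, c2} : Finset ℕ),
        (Finset.univ.filter (fun w : V => f w = c)).card =
        (Finset.univ.filter (fun w : V => f w = c1)).card +
        (Finset.univ.filter (fun w : V => f w = c2)).card := Finset.sum_pair hne
    have hrest : (Finset.range (m + 1) \ ({c1, c2} : Finset ℕ)).card * 1 ≤
        ∑ c ∈ Finset.range (m + 1) \ ({c1, c2} : Finset ℕ),
          (Finset.univ.filter (fun w : V => f w = c)).card := by
      have := Finset.card_nsmul_le_sum (Finset.range (m + 1) \ ({c1, c2} : Finset ℕ))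
        (fun c => (Finset.univ.filter (fun w : V => f w = c)).card) 1 hone
      simpa using this
    simp only [mul_one] at hrest
    have hcardsd : (Finset.range (m + 1) \ ({c1, c2} : Finset ℕ)).card = m + 1 - 2 := by
      rw [Finset.card_sdiff_of_subset hsub, Finset.card_range, Finset.card_pair hne]
    have h21 := hcard2 c1 u1 v1 hne1 hu1 hv1
    have h22 := hcard2 c2 u2 v2 hne2 hu2 hv2
    rw [Finset.card_univ, hcard] at hsum
    rw [hcardsd] at hrest
    omega
  have final : ∀ s : ℕ, s + 5 ≤ m →
      (∀ u v : V, f u = s → f v = s → u = v) →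
      (∀ u v : V, f u = s + 1 → f v = s + 1 → u = v) →
      (∀ u v : V, f u = s + 2 → f v = s + 2 → u = v) →
      (∀ u v : V, f u = s + 5 → f v = s + 5 → u = v) → theta 3 T ≤ 2 := by
    intro s hs h0 h1 h2 h5
    obtain ⟨H, hASC, hind⟩ := main_construction T f s hlip hdesc
      (fun k hk1 hk2 => hex k (by omega)) h0 h1 h2 h5
    exact Nat.sInf_le ⟨H, hASC, hind⟩
  have hsA : ∀ u v : V, f u = 0 → f v = 0 → u = v := by
    intro u v hu hv
    have h1 : a = u := (hconn.dist_eq_zero_iff).mp hu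
    have h2 : a = v := (hconn.dist_eq_zero_iff).mp hv
    rw [← h1, ← h2]
  by_cases h1 : ∀ u v : V, f u = 1 → f v = 1 → u = v
  · by_cases h2 : ∀ u v : V, f u = 2 → f v = 2 → u = v
    · by_cases h5 : ∀ u v : V, f u = 5 → f v = 5 → u = v
      · exact final 0 (by omega) hsA h1 h2 h5
      · have h3 : ∀ u v : V, f u = 3 → f v = 3 → u = v := by
          by_contra hc; exact key 3 5 (by omega) (by omega) (by omega) hc h5
        have h6 : ∀ u v : V, f u = 6 → f v = 6 → u = v := by
          by_contra hc; exact key 6 5 (by omega) (by omega) (by omega) hc h5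
        exact final 1 (by omega) h1 h2 h3 h6
    · have h3 : ∀ u v : V, f u = 3 → f v = 3 → u = v := by
        by_contra hc; exact key 3 2 (by omega) (by omega) (by omega) hc h2
      have h4 : ∀ u v : V, f u = 4 → f v = 4 → u = v := by
        by_contra hc; exact key 4 2 (by omega) (by omega) (by omega) hc h2
      have h5' : ∀ u v : V, f u = 5 → f v = 5 → u = v := by
        by_contra hc; exact key 5 2 (by omega) (by omega) (by omega) hc h2
      have h8 : ∀ u v : V, f u = 8 → f v = 8 → u = v := by
        by_contra hc; exact key 8 2 (by omega) (by omega) (by omega) hc h2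
      exact final 3 (by omega) h3 h4 h5' h8
  · have h3 : ∀ u v : V, f u = 3 → f v = 3 → u = v := by
      by_contra hc; exact key 3 1 (by omega) (by omega) (by omega) hc h1
    have h4 : ∀ u v : V, f u = 4 → f v = 4 → u = v := by
      by_contra hc; exact key 4 1 (by omega) (by omega) (by omega) hc h1
    have h5' : ∀ u v : V, f u = 5 → f v = 5 → u = v := by
      by_contra hc; exact key 5 1 (by omega) (by omega) (by omega) hc h1
    have h8 : ∀ u v : V, f u = 8 → f v = 8 → u = v := by
      by_contra hc; exact key 8 1 (by omega) (by omega) (by omega) hc h1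
    exact final 3 (by omega) h3 h4 h5' h8

end AscPaper
end

section
/- If T is a tree of order n ≥ 10 and diameter n − 2, then θ_3(T) ≥ 2. -/
namespace AscPaper

open SimpleGraph

/-! ### Generic helpers -/

section Helpers

variable {W : Type*} {G : SimpleGraph W}

lemma le_edist_of_forall_walk {u v : W} (c : ℕ∞)
    (h : ∀ p : G.Walk u v, c ≤ p.length) : c ≤ G.edist u v := by
  rw [edist_eq_sInf]
  exact le_sInf (by rintro _ ⟨p, rfl⟩; exact h p)

lemma walk_lb (g : W → ℕ∞) (hg : ∀ a b : W, G.Adj a b → g a ≤ g b + 1) :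
    ∀ {u v : W} (p : G.Walk u v), g u ≤ g v + p.length := by
  intro u v p
  induction p with
  | nil => simp
  | @cons a x v h q ih =>
    calc g a ≤ g x + 1 := hg a x h
      _ ≤ (g v + q.length) + 1 := add_le_add_left ih 1
      _ = g v + ((q.length : ℕ∞) + 1) := by rw [add_assoc]
      _ = g v + (q.cons h).length := by
            rw [Walk.length_cons]; push_cast; ring

lemma edist_lb (g : W → ℕ∞) (hg : ∀ a b : W, G.Adj a b → g a ≤ g b + 1)
    {u v : W} (hv : g v = 0) : g u ≤ G.edist u v :=
  le_edist_of_forall_walk _ (fun p => by simpa [hv] using walk_lb g hg p)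

lemma edist_le_ecc {u v : W} : G.edist u v ≤ ecc G u := le_iSup _ v

lemma ecc_le_iff {u : W} {c : ℕ∞} : ecc G u ≤ c ↔ ∀ v, G.edist u v ≤ c := iSup_le_iff

lemma radius_le_ecc (u : W) : graphRadius G ≤ ecc G u := iInf_le _ u

lemma exists_ecc_eq_diam [Finite W] [Nonempty W] (G : SimpleGraph W) :
    ∃ u v : W, G.edist u v = graphDiam G := by
  obtain ⟨u, hu⟩ := Finite.exists_max (ecc G)
  obtain ⟨v, hv⟩ := Finite.exists_max (G.edist u)
  refine ⟨u, v, ?_⟩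
  have h1 : ecc G u = graphDiam G := le_antisymm (le_iSup _ u) (iSup_le hu)
  have h2 : G.edist u v = ecc G u := le_antisymm (le_iSup _ v) (iSup_le hv)
  rw [h2, h1]

lemma exists_ecc_eq_radius [Finite W] [Nonempty W] (G : SimpleGraph W) :
    ∃ u : W, ecc G u = graphRadius G := by
  obtain ⟨u, hu⟩ := Finite.exists_min (ecc G)
  exact ⟨u, le_antisymm (le_iInf hu) (iInf_le _ u)⟩

lemma adj_edist_le_one {u v : W} (h : G.Adj u v) : G.edist u v ≤ 1 :=
  le_of_eq (edist_eq_one_iff_adj.2 h)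

lemma one_le_edist_of_ne {u v : W} (h : u ≠ v) : 1 ≤ G.edist u v :=
  Order.one_le_iff_pos.mpr (edist_pos_of_ne h)

end Helpers

/-! ### The k = 0 case -/

section LowerBound

variable {V : Type*} [Fintype V] {T : SimpleGraph V}

lemma exists_diam_pair {n : ℕ} (hcard : Fintype.card V = n) (hn : 10 ≤ n)
    (hdiam : graphDiam T = ((n - 2 : ℕ) : ℕ∞)) :
    ∃ u v : V, T.edist u v = ((n - 2 : ℕ) : ℕ∞) := by
  have : Nonempty V := Fintype.card_pos_iff.mp (by omega)
  obtain ⟨u, v, h⟩ := exists_ecc_eq_diam T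
  exact ⟨u, v, h.trans hdiam⟩

/-- k = 0 is impossible. -/
lemma no_zero {n : ℕ} (hcard : Fintype.card V = n) (hn : 10 ≤ n)
    (hdiam : graphDiam T = ((n - 2 : ℕ) : ℕ∞)) :
    ¬ (∃ H : SimpleGraph (V ⊕ Fin 0), IsASC 3 H ∧
      ∀ u v : V, H.Adj (Sum.inl u) (Sum.inl v) ↔ T.Adj u v) := by
  rintro ⟨H, ⟨hHconn, hHrad, -⟩, hind⟩
  obtain ⟨u, v, huv⟩ := exists_diam_pair hcard hn hdiam
  have : Nonempty V := Fintype.card_pos_iff.mp (by omega)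
  obtain ⟨c, hc⟩ := exists_ecc_eq_radius H
  rw [hHrad] at hc
  have hlb : T.edist u v ≤ H.edist (Sum.inl u) (Sum.inl v) := by
    have := edist_lb (G := H) (Sum.elim (fun a => T.edist a v) Fin.elim0)
      (fun a b hab => by
        cases a with
        | inr i => exact i.elim0
        | inl a =>
          cases b with
          | inr i => exact i.elim0
          | inl b =>
            have hT : T.Adj a b := (hind a b).1 hab
            calc (Sum.elim (fun a => T.edist a v) Fin.elim0) (Sum.inl a)
                = T.edist a v := rfl
              _ ≤ T.edist a b + T.edist b v := SimpleGraph.edist_triangle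
              _ ≤ 1 + T.edist b v := add_le_add_left (adj_edist_le_one hT) _
              _ = T.edist b v + 1 := add_comm _ _)
      (u := Sum.inl u) (v := Sum.inl v) (by simp)
    simpa using this
  have h1 : H.edist (Sum.inl u) (Sum.inl v) ≤ 6 := by
    calc H.edist (Sum.inl u) (Sum.inl v)
        ≤ H.edist (Sum.inl u) c + H.edist c (Sum.inl v) := SimpleGraph.edist_triangle
      _ ≤ 3 + 3 := by
          refine add_le_add ?_ ?_
          · rw [SimpleGraph.edist_comm]; exact edist_le_ecc.trans (le_of_eq hc)
          · exact edist_le_ecc.trans (le_of_eq hc)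
      _ = 6 := by norm_num
  rw [huv] at hlb
  have h2 : ((n - 2 : ℕ) : ℕ∞) ≤ ((6 : ℕ) : ℕ∞) := by
    refine (hlb.trans h1).trans (le_of_eq ?_); norm_num
  rw [Nat.cast_le] at h2
  omega

/-! ### Geodesics -/

omit [Fintype V] in
lemma edist_getVert_le {u v : V} (p : T.Walk u v) {i j : ℕ} (hij : i ≤ j)
    (hj : j ≤ p.length) : T.edist (p.getVert i) (p.getVert j) ≤ ((j - i : ℕ) : ℕ∞) := by
  induction j, hij using Nat.le_induction with
  | base => simp
  | succ j hij ih =>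
    have h1 : T.edist (p.getVert j) (p.getVert (j + 1)) ≤ 1 :=
      adj_edist_le_one (p.adj_getVert_succ (by omega))
    calc T.edist (p.getVert i) (p.getVert (j + 1))
        ≤ T.edist (p.getVert i) (p.getVert j) + T.edist (p.getVert j) (p.getVert (j + 1)) :=
          SimpleGraph.edist_triangle
      _ ≤ ((j - i : ℕ) : ℕ∞) + 1 := add_le_add (ih (by omega)) h1
      _ = ((j + 1 - i : ℕ) : ℕ∞) := by
          rw [show j + 1 - i = (j - i) + 1 from by omega]; push_cast; ring

omit [Fintype V] in
lemma geodesic_getVert {u v : V} {m : ℕ} (p : T.Walk u v) (hlen : p.length = m)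
    (hdist : T.edist u v = (m : ℕ∞)) {i j : ℕ} (hij : i ≤ j) (hj : j ≤ m) :
    T.edist (p.getVert i) (p.getVert j) = ((j - i : ℕ) : ℕ∞) := by
  have hup : T.edist (p.getVert i) (p.getVert j) ≤ ((j - i : ℕ) : ℕ∞) :=
    edist_getVert_le p hij (by omega)
  refine le_antisymm hup ?_
  lift T.edist (p.getVert i) (p.getVert j) to ℕ using
    (ne_top_of_le_ne_top (ENat.coe_ne_top _) hup) with e he
  have h0 : T.edist u (p.getVert i) ≤ (i : ℕ∞) := by
    have h := edist_getVert_le p (Nat.zero_le i) (j := i) (by omega)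
    simpa using h
  have hm : T.edist (p.getVert j) v ≤ ((m - j : ℕ) : ℕ∞) := by
    have h := edist_getVert_le p (i := j) (j := p.length) (by omega) le_rfl
    rw [p.getVert_length] at h
    rw [hlen] at h
    exact h
  have htri : (m : ℕ∞) ≤ (i : ℕ∞) + (e : ℕ∞) + ((m - j : ℕ) : ℕ∞) := by
    calc (m : ℕ∞) = T.edist u v := hdist.symm
      _ ≤ T.edist u (p.getVert i) + T.edist (p.getVert i) v := SimpleGraph.edist_triangle
      _ ≤ T.edist u (p.getVert i) +
          (T.edist (p.getVert i) (p.getVert j) + T.edist (p.getVert j) v) :=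
          add_le_add_right SimpleGraph.edist_triangle _
      _ ≤ (i : ℕ∞) + ((e : ℕ∞) + ((m - j : ℕ) : ℕ∞)) := by
          refine add_le_add h0 (add_le_add (le_of_eq he.symm) hm)
      _ = (i : ℕ∞) + (e : ℕ∞) + ((m - j : ℕ) : ℕ∞) := by rw [add_assoc]
  have htri' : m ≤ i + e + (m - j) := by exact_mod_cast htri
  have hup' : e ≤ j - i := by exact_mod_cast hup
  exact_mod_cast (by omega : j - i ≤ e)

end LowerBound

section KOne

variable {V : Type*} [Fintype V] {T : SimpleGraph V}

omit [Fintype V] in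
/-- T-distance dominates H-distance on `inl` vertices. -/
lemma edist_inl_le {H : SimpleGraph (V ⊕ Fin 1)}
    (hind : ∀ u v : V, H.Adj (Sum.inl u) (Sum.inl v) ↔ T.Adj u v) (a b : V) :
    H.edist (Sum.inl a) (Sum.inl b) ≤ T.edist a b := by
  by_cases hr : T.Reachable a b
  · obtain ⟨p, hp⟩ := hr.exists_walk_length_eq_edist
    rw [← hp]
    clear hp hr
    induction p with
    | nil => simp
    | @cons x y z h q ih =>
      calc H.edist (Sum.inl x) (Sum.inl z)
          ≤ H.edist (Sum.inl x) (Sum.inl y) + H.edist (Sum.inl y) (Sum.inl z) :=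
            SimpleGraph.edist_triangle
        _ ≤ 1 + (q.length : ℕ∞) := add_le_add (adj_edist_le_one ((hind x y).2 h)) ih
        _ = ((q.cons h).length : ℕ∞) := by rw [Walk.length_cons]; push_cast; ring
  · rw [edist_eq_top_of_not_reachable hr]; exact le_top

omit [Fintype V] in
/-- Key decomposition bound : a walk between two `inl` vertices either stays in `T`
or passes through the extra vertex. -/
lemma key_min_le {H : SimpleGraph (V ⊕ Fin 1)}
    (hind : ∀ u v : V, H.Adj (Sum.inl u) (Sum.inl v) ↔ T.Adj u v) (a b : V) :
    min (T.edist a b)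
      (H.edist (Sum.inl a) (Sum.inr 0) + H.edist (Sum.inr 0) (Sum.inl b)) ≤
      H.edist (Sum.inl a) (Sum.inl b) := by
  set D : ℕ∞ := H.edist (Sum.inr 0) (Sum.inl b) with hD
  set g : V ⊕ Fin 1 → ℕ∞ := fun x =>
    match x with
    | Sum.inl c => min (T.edist c b) (H.edist (Sum.inl c) (Sum.inr 0) + D)
    | Sum.inr _ => D with hg
  have hgb : g (Sum.inl b) = 0 := by
    simp only [hg]
    simp
  have hlip : ∀ x y : V ⊕ Fin 1, H.Adj x y → g x ≤ g y + 1 := by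
    intro x y hxy
    match x, y with
    | Sum.inl c, Sum.inl c' =>
      have hT : T.Adj c c' := (hind c c').1 hxy
      show min (T.edist c b) (H.edist (Sum.inl c) (Sum.inr 0) + D) ≤
        min (T.edist c' b) (H.edist (Sum.inl c') (Sum.inr 0) + D) + 1
      have h1 : T.edist c b ≤ T.edist c' b + 1 := by
        calc T.edist c b ≤ T.edist c c' + T.edist c' b := SimpleGraph.edist_triangle
          _ ≤ 1 + T.edist c' b := add_le_add_left (adj_edist_le_one hT) _
          _ = T.edist c' b + 1 := add_comm _ _
      have h2 : H.edist (Sum.inl c) (Sum.inr 0) + D ≤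
          (H.edist (Sum.inl c') (Sum.inr 0) + D) + 1 := by
        have : H.edist (Sum.inl c) (Sum.inr 0) ≤ H.edist (Sum.inl c') (Sum.inr 0) + 1 := by
          calc H.edist (Sum.inl c) (Sum.inr 0)
              ≤ H.edist (Sum.inl c) (Sum.inl c') + H.edist (Sum.inl c') (Sum.inr 0) :=
                SimpleGraph.edist_triangle
            _ ≤ 1 + H.edist (Sum.inl c') (Sum.inr 0) := add_le_add_left (adj_edist_le_one hxy) _
            _ = H.edist (Sum.inl c') (Sum.inr 0) + 1 := add_comm _ _
        calc H.edist (Sum.inl c) (Sum.inr 0) + D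
            ≤ (H.edist (Sum.inl c') (Sum.inr 0) + 1) + D := add_le_add_left this D
          _ = (H.edist (Sum.inl c') (Sum.inr 0) + D) + 1 := by ring
      calc min (T.edist c b) (H.edist (Sum.inl c) (Sum.inr 0) + D)
          ≤ min (T.edist c' b + 1) ((H.edist (Sum.inl c') (Sum.inr 0) + D) + 1) :=
            le_min ((min_le_left _ _).trans h1) ((min_le_right _ _).trans h2)
        _ = min (T.edist c' b) (H.edist (Sum.inl c') (Sum.inr 0) + D) + 1 :=
            (min_add_add_right _ _ _)
    | Sum.inl c, Sum.inr t =>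
      show min (T.edist c b) (H.edist (Sum.inl c) (Sum.inr 0) + D) ≤ D + 1
      have ht : (t : Fin 1) = 0 := Subsingleton.elim _ _
      rw [ht] at hxy
      have : H.edist (Sum.inl c) (Sum.inr 0) ≤ 1 := adj_edist_le_one hxy
      calc min (T.edist c b) (H.edist (Sum.inl c) (Sum.inr 0) + D)
          ≤ H.edist (Sum.inl c) (Sum.inr 0) + D := min_le_right _ _
        _ ≤ 1 + D := add_le_add_left this D
        _ = D + 1 := add_comm _ _
    | Sum.inr t, Sum.inl c =>
      show D ≤ min (T.edist c b) (H.edist (Sum.inl c) (Sum.inr 0) + D) + 1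
      have ht : (t : Fin 1) = 0 := Subsingleton.elim _ _
      rw [ht] at hxy
      have h1 : D ≤ T.edist c b + 1 := by
        calc D = H.edist (Sum.inr 0) (Sum.inl b) := hD
          _ ≤ H.edist (Sum.inr 0) (Sum.inl c) + H.edist (Sum.inl c) (Sum.inl b) :=
              SimpleGraph.edist_triangle
          _ ≤ 1 + T.edist c b := by
              refine add_le_add ?_ (edist_inl_le hind c b)
              rw [SimpleGraph.edist_comm]
              exact adj_edist_le_one hxy.symm
          _ = T.edist c b + 1 := add_comm _ _
      have h2 : D ≤ (H.edist (Sum.inl c) (Sum.inr 0) + D) + 1 :=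
        le_add_self.trans (le_add_right le_rfl)
      calc D ≤ min (T.edist c b + 1) ((H.edist (Sum.inl c) (Sum.inr 0) + D) + 1) :=
            le_min h1 h2
        _ = min (T.edist c b) (H.edist (Sum.inl c) (Sum.inr 0) + D) + 1 :=
            min_add_add_right _ _ _
    | Sum.inr t, Sum.inr t' =>
      exact absurd hxy (by
        have : (t : Fin 1) = t' := Subsingleton.elim _ _
        rw [this]; exact H.irrefl)
  have := edist_lb g hlip (u := Sum.inl a) (v := Sum.inl b) hgb
  exact this

/-- k = 1 is impossible. -/
lemma no_one {n : ℕ} (hcard : Fintype.card V = n) (hn : 10 ≤ n)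
    (hconn : T.Connected)
    (hdiam : graphDiam T = ((n - 2 : ℕ) : ℕ∞)) :
    ¬ (∃ H : SimpleGraph (V ⊕ Fin 1), IsASC 3 H ∧
      ∀ u v : V, H.Adj (Sum.inl u) (Sum.inl v) ↔ T.Adj u v) := by
  rintro ⟨H, ⟨hHconn, hHrad, hN⟩, hind⟩
  have hVne : Nonempty V := Fintype.card_pos_iff.mp (by omega)
  set m : ℕ := n - 2 with hm
  have hm8 : 8 ≤ m := by omega
  rw [hHrad] at hN
  have hHrad' : graphRadius H = (3 : ℕ∞) := by rw [hHrad]; norm_num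
  have hN' : {u : V ⊕ Fin 1 | ecc H u ≠ (3 : ℕ∞)}.ncard = 2 := by
    have : ((3 : ℕ) : ℕ∞) = (3 : ℕ∞) := by norm_num
    rw [this] at hN
    exact hN
  -- every vertex has eccentricity ≥ 3
  have hecc_ge : ∀ x : V ⊕ Fin 1, (3 : ℕ∞) ≤ ecc H x := fun x => by
    rw [← hHrad']; exact radius_le_ecc x
  -- central vertices see everything within 3
  have hcent : ∀ x : V ⊕ Fin 1, ecc H x = (3 : ℕ∞) → ∀ y, H.edist x y ≤ 3 :=
    fun x hx y => edist_le_ecc.trans (le_of_eq hx)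
  -- find z at distance ≥ 3 from the extra vertex w
  have hz : ∃ z : V, (3 : ℕ∞) ≤ H.edist (Sum.inr 0) (Sum.inl z) := by
    by_contra hcon
    push_neg at hcon
    have : ecc H (Sum.inr 0) ≤ 2 := by
      rw [ecc_le_iff]
      intro y
      match y with
      | Sum.inl z =>
        exact Order.le_of_lt_add_one ((hcon z).trans_le (by norm_num))
      | Sum.inr t =>
        have ht0 : (t : Fin 1) = 0 := Subsingleton.elim _ _
        rw [ht0]
        rw [SimpleGraph.edist_self]
        norm_num
    have h3 := hecc_ge (Sum.inr 0)
    have : (3 : ℕ∞) ≤ 2 := h3.trans this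
    norm_num at this
  obtain ⟨z, hz3⟩ := hz
  -- diametral pair
  obtain ⟨u, v, huv⟩ := exists_diam_pair hcard hn hdiam
  rw [← hm] at huv
  -- z is not central
  have hznc : ecc H (Sum.inl z) ≠ (3 : ℕ∞) := by
    intro hzc
    -- get a vertex y' at T-distance ≥ 4 from z
    have hfar : ∃ y' : V, (4 : ℕ∞) ≤ T.edist z y' := by
      by_contra hcon
      push_neg at hcon
      have hcu : T.edist z u ≤ 3 := Order.le_of_lt_add_one ((hcon u).trans_le (by norm_num))
      have hcv : T.edist z v ≤ 3 := Order.le_of_lt_add_one ((hcon v).trans_le (by norm_num))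
      have h2 : (m : ℕ∞) ≤ (6 : ℕ∞) := by
        calc (m : ℕ∞) = T.edist u v := huv.symm
          _ ≤ T.edist u z + T.edist z v := SimpleGraph.edist_triangle
          _ = T.edist z u + T.edist z v := by rw [SimpleGraph.edist_comm (u := u)]
          _ ≤ 3 + 3 := add_le_add hcu hcv
          _ = 6 := by norm_num
      have : m ≤ 6 := by exact_mod_cast h2
      omega
    obtain ⟨y', hy4⟩ := hfar
    have hle3 := hcent _ hzc (Sum.inl y')
    have hkey := key_min_le hind z y'
    have hmin : min (T.edist z y')
        (H.edist (Sum.inl z) (Sum.inr 0) + H.edist (Sum.inr 0) (Sum.inl y')) ≤ 3 :=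
      hkey.trans hle3
    rcases min_le_iff.mp hmin with h | h
    · exact absurd (hy4.trans h) (by norm_num)
    · have hzw : (3 : ℕ∞) ≤ H.edist (Sum.inl z) (Sum.inr 0) := by
        rw [SimpleGraph.edist_comm]; exact hz3
      have hwy : (1 : ℕ∞) ≤ H.edist (Sum.inr 0) (Sum.inl y') :=
        one_le_edist_of_ne (by simp)
      have : (4 : ℕ∞) ≤ H.edist (Sum.inl z) (Sum.inr 0) + H.edist (Sum.inr 0) (Sum.inl y') := by
        calc (4 : ℕ∞) = 3 + 1 := by norm_num
          _ ≤ _ := add_le_add hzw hwy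
      exact absurd (this.trans h) (by norm_num)
  -- every central inl vertex is T-close to z
  have hclose : ∀ a : V, ecc H (Sum.inl a) = (3 : ℕ∞) → T.edist a z ≤ 3 := by
    intro a ha
    have hle3 := hcent _ ha (Sum.inl z)
    have hkey := key_min_le hind a z
    have hmin : min (T.edist a z)
        (H.edist (Sum.inl a) (Sum.inr 0) + H.edist (Sum.inr 0) (Sum.inl z)) ≤ 3 :=
      hkey.trans hle3
    rcases min_le_iff.mp hmin with h | h
    · exact h
    · exfalso
      have hwa : (1 : ℕ∞) ≤ H.edist (Sum.inl a) (Sum.inr 0) :=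
        one_le_edist_of_ne (by simp)
      have : (4 : ℕ∞) ≤ H.edist (Sum.inl a) (Sum.inr 0) + H.edist (Sum.inr 0) (Sum.inl z) := by
        calc (4 : ℕ∞) = 1 + 3 := by norm_num
          _ ≤ _ := add_le_add hwa hz3
      exact absurd (this.trans h) (by norm_num)
  -- geodesic path
  obtain ⟨p, hp⟩ := exists_walk_of_edist_eq_coe huv
  classical
  -- counting
  let B : Finset V := Finset.univ.filter (fun y => T.edist y z ≤ 3)
  -- upper bound on B
  have hBle : B.card ≤ 8 := by
    let P : Finset V := (Finset.range (m + 1)).image p.getVert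
    have hinj : Set.InjOn p.getVert (Finset.range (m + 1)) := by
      intro i hi j hj hij
      simp only [Finset.coe_range, Set.mem_Iio] at hi hj
      rcases le_total i j with h | h
      · have := geodesic_getVert p hp huv h (by omega)
        rw [hij] at this
        rw [SimpleGraph.edist_self] at this
        have : j - i = 0 := by exact_mod_cast this.symm
        omega
      · have := geodesic_getVert p hp huv h (by omega)
        rw [hij] at this
        rw [SimpleGraph.edist_self] at this
        have : i - j = 0 := by exact_mod_cast this.symm
        omega
    have hPcard : P.card = m + 1 := by
      rw [Finset.card_image_of_injOn hinj, Finset.card_range]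
    have h1 : (B \ P).card ≤ 1 := by
      have hsub : B \ P ⊆ Finset.univ \ P := by
        intro x hx
        rw [Finset.mem_sdiff] at hx ⊢
        exact ⟨Finset.mem_univ x, hx.2⟩
      have : (Finset.univ \ P).card = n - (m + 1) := by
        rw [Finset.card_sdiff_of_subset (Finset.subset_univ P), hPcard, Finset.card_univ, hcard]
      have := Finset.card_le_card hsub
      omega
    have h2 : (B ∩ P).card ≤ 7 := by
      let I : Finset ℕ := (Finset.range (m + 1)).filter
        (fun i => T.edist (p.getVert i) z ≤ 3)
      have hBP : B ∩ P ⊆ I.image p.getVert := by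
        intro y hy
        rw [Finset.mem_inter] at hy
        obtain ⟨hyB, hyP⟩ := hy
        obtain ⟨i, hi, hiy⟩ := Finset.mem_image.mp hyP
        refine Finset.mem_image.mpr ⟨i, ?_, hiy⟩
        rw [Finset.mem_filter]
        refine ⟨hi, ?_⟩
        rw [hiy]
        exact (Finset.mem_filter.mp hyB).2
      have hIcard : I.card ≤ 7 := by
        rcases Finset.eq_empty_or_nonempty I with hI | hI
        · rw [hI]; simp
        · set a := I.min' hI with ha
          have haI : a ∈ I := I.min'_mem hI
          have hsub : I ⊆ Finset.Icc a (a + 6) := by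
            intro i hi
            rw [Finset.mem_Icc]
            refine ⟨I.min'_le i hi, ?_⟩
            have hiI := Finset.mem_filter.mp hi
            have haI' := Finset.mem_filter.mp haI
            have hirange : i < m + 1 := Finset.mem_range.mp hiI.1
            have harange : a < m + 1 := Finset.mem_range.mp haI'.1
            have hai : a ≤ i := I.min'_le i hi
            have hd : T.edist (p.getVert a) (p.getVert i) = ((i - a : ℕ) : ℕ∞) :=
              geodesic_getVert p hp huv hai (by omega)
            have : T.edist (p.getVert a) (p.getVert i) ≤ 6 := by
              calc T.edist (p.getVert a) (p.getVert i)
                  ≤ T.edist (p.getVert a) z + T.edist z (p.getVert i) :=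
                    SimpleGraph.edist_triangle
                _ ≤ 3 + 3 := by
                    refine add_le_add haI'.2 ?_
                    rw [SimpleGraph.edist_comm]; exact hiI.2
                _ = 6 := by norm_num
            rw [hd] at this
            have : i - a ≤ 6 := by exact_mod_cast this
            omega
          calc I.card ≤ (Finset.Icc a (a + 6)).card := Finset.card_le_card hsub
            _ = 7 := by rw [Nat.card_Icc]; omega
      calc (B ∩ P).card ≤ (I.image p.getVert).card := Finset.card_le_card hBP
        _ ≤ I.card := Finset.card_image_le
        _ ≤ 7 := hIcard
    have := Finset.card_inter_add_card_sdiff B P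
    omega
  -- lower bound on B
  have hBge : n - 1 ≤ B.card := by
    let C : Finset V := Finset.univ.filter (fun a => ecc H (Sum.inl a) = (3 : ℕ∞))
    have hCcard : n - 2 ≤ C.card := by
      let Cc : Finset V := Finset.univ.filter (fun a => ecc H (Sum.inl a) ≠ (3 : ℕ∞))
      have hCc2 : Cc.card ≤ 2 := by
        have hNfin : {u : V ⊕ Fin 1 | ecc H u ≠ (3 : ℕ∞)}.Finite := Set.toFinite _
        have hNcard : hNfin.toFinset.card = 2 := by
          rw [← Set.ncard_eq_toFinset_card _ hNfin]
          exact hN'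
        have : Cc.card ≤ hNfin.toFinset.card := by
          apply Finset.card_le_card_of_injOn Sum.inl
          · intro a ha
            rw [Finset.mem_coe, Set.Finite.mem_toFinset]
            exact (Finset.mem_filter.mp (Finset.mem_coe.mp ha)).2
          · intro a _ b _ hab
            exact Sum.inl_injective hab
        omega
      have : C.card + Cc.card = n := by
        rw [← hcard, ← Finset.card_univ]
        exact Finset.card_filter_add_card_filter_not _
      omega
    have hzC : z ∉ C := by
      intro hzc
      exact hznc (Finset.mem_filter.mp hzc).2
    have hCB : C ⊆ B := by
      intro a ha
      rw [Finset.mem_filter]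
      exact ⟨Finset.mem_univ a, hclose a (Finset.mem_filter.mp ha).2⟩
    have hzB : z ∈ B := by
      rw [Finset.mem_filter]
      simp
    have hins : insert z C ⊆ B := by
      intro x hx
      rcases Finset.mem_insert.mp hx with h | h
      · rw [h]; exact hzB
      · exact hCB h
    have : (insert z C).card = C.card + 1 := Finset.card_insert_of_notMem hzC
    have := Finset.card_le_card hins
    omega
  omega

end KOne

/-! ### The gadget graph: existence of a 3-ASC extension -/

section Gadget

/-- gadget graph adjacency -/
def mAdj (a b : Fin 8) : Bool :=
  let p := (min a.val b.val, max a.val b.val)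
  p = (0,1) || p = (0,5) || p = (0,6) || p = (1,5) || p = (2,3) || p = (2,4) ||
    p = (3,5) || p = (4,6) || p = (6,7)

lemma mAdj_symm : ∀ a b, mAdj a b → mAdj b a := by decide
lemma mAdj_irrefl : ∀ a, ¬ mAdj a a := by decide

def MG : SimpleGraph (Fin 8) where
  Adj a b := mAdj a b
  symm := ⟨fun a b h => mAdj_symm a b h⟩
  loopless := ⟨fun a h => mAdj_irrefl a h⟩

instance : DecidableRel MG.Adj := fun a b => inferInstanceAs (Decidable (mAdj a b = true))

def dm : Fin 8 → Fin 8 → ℕ :=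
  ![![0,1,3,2,2,1,1,2],
    ![1,0,3,2,3,1,2,3],
    ![3,3,0,1,1,2,2,3],
    ![2,2,1,0,2,1,3,4],
    ![2,3,1,2,0,3,1,2],
    ![1,1,2,1,3,0,2,3],
    ![1,2,2,3,1,2,0,1],
    ![2,3,3,4,2,3,1,0]]

def em : Fin 8 → ℕ := ![3,3,3,4,3,3,3,4]
def wt : Fin 8 → Fin 8 := ![2,2,1,7,5,4,3,3]

lemma dm_refl : ∀ a : Fin 8, dm a a = 0 := by decide
lemma dm_lip : ∀ a b c : Fin 8, MG.Adj a b → dm a c ≤ dm b c + 1 := by decide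
lemma dm_zero : ∀ a b : Fin 8, dm a b = 0 → a = b := by decide
lemma dm_step : ∀ a b : Fin 8, dm a b ≠ 0 → ∃ c, MG.Adj a c ∧ dm c b + 1 ≤ dm a b := by decide
lemma dm_le_em : ∀ a b : Fin 8, dm a b ≤ em a := by decide
lemma dm_wt : ∀ a : Fin 8, dm a (wt a) = em a ∧ wt a ≠ 0 := by decide
lemma dm_zero_le : ∀ b : Fin 8, dm 0 b ≤ 3 := by decide
lemma em_ge : ∀ a : Fin 8, 3 ≤ em a := by decide
lemma em_ne_three : ∀ i : Fin 7, (em i.succ ≠ 3 ↔ (i = 2 ∨ i = 6)) := by decide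
lemma mg01 : MG.Adj 0 1 := by decide

variable {V : Type*}

/-- projection to the model graph -/
def fH : V ⊕ Fin 7 → Fin 8 := Sum.elim (fun _ => 0) Fin.succ

/-- the extension graph -/
def HG (T : SimpleGraph V) : SimpleGraph (V ⊕ Fin 7) where
  Adj x y := match x, y with
    | Sum.inl u, Sum.inl v => T.Adj u v
    | Sum.inl _, Sum.inr b => MG.Adj 0 b.succ
    | Sum.inr a, Sum.inl _ => MG.Adj a.succ 0
    | Sum.inr a, Sum.inr b => MG.Adj a.succ b.succ
  symm := ⟨by rintro (u|a) (v|b) h <;> exact h.symm⟩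
  loopless := ⟨by rintro (u|a) h; exacts [T.irrefl h, MG.irrefl h]⟩

variable {T : SimpleGraph V}

lemma HG_step : ∀ x y : V ⊕ Fin 7, (HG T).Adj x y →
    fH x = fH y ∨ MG.Adj (fH x) (fH y) := by
  rintro (u|a) (v|b) h
  · exact Or.inl rfl
  · exact Or.inr h
  · exact Or.inr h
  · exact Or.inr h

lemma HG_lb (x y : V ⊕ Fin 7) : (dm (fH x) (fH y) : ℕ∞) ≤ (HG T).edist x y := by
  refine edist_lb (fun w => (dm (fH w) (fH y) : ℕ∞)) ?_ ?_
  · intro a b hab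
    show (dm (fH a) (fH y) : ℕ∞) ≤ (dm (fH b) (fH y) : ℕ∞) + 1
    rcases HG_step a b hab with h | h
    · rw [h]; exact le_self_add
    · exact_mod_cast dm_lip _ _ _ h
  · show (dm (fH y) (fH y) : ℕ∞) = 0
    exact_mod_cast dm_refl (fH y)

/-- lift of model vertices -/
def liftV (v₀ : V) : Fin 8 → V ⊕ Fin 7 :=
  Fin.cases (Sum.inl v₀) (fun i => Sum.inr i)

@[simp] lemma liftV_zero (v₀ : V) : liftV v₀ 0 = Sum.inl v₀ := rfl
@[simp] lemma liftV_succ (v₀ : V) (i : Fin 7) : liftV v₀ i.succ = Sum.inr i := by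
  simp [liftV]

lemma lift_adj (v₀ : V) {a b : Fin 8} (h : MG.Adj a b) :
    (HG T).Adj (liftV v₀ a) (liftV v₀ b) := by
  induction a using Fin.cases with
  | zero =>
    induction b using Fin.cases with
    | zero => exact absurd h MG.irrefl
    | succ j => rw [liftV_zero, liftV_succ]; exact h
  | succ i =>
    induction b using Fin.cases with
    | zero => rw [liftV_zero, liftV_succ]; exact h
    | succ j => rw [liftV_succ, liftV_succ]; exact h

lemma lift_edist_le (v₀ : V) : ∀ (N : ℕ) (a b : Fin 8), dm a b ≤ N →
    (HG T).edist (liftV v₀ a) (liftV v₀ b) ≤ (dm a b : ℕ∞) := by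
  intro N
  induction N with
  | zero =>
    intro a b hab
    have : a = b := dm_zero a b (by omega)
    subst this
    rw [SimpleGraph.edist_self]
    exact zero_le
  | succ N ih =>
    intro a b hab
    by_cases h0 : dm a b = 0
    · have : a = b := dm_zero a b h0
      subst this
      rw [SimpleGraph.edist_self]
      exact zero_le
    · obtain ⟨c, hc1, hc2⟩ := dm_step a b h0
      calc (HG T).edist (liftV v₀ a) (liftV v₀ b)
          ≤ (HG T).edist (liftV v₀ a) (liftV v₀ c) + (HG T).edist (liftV v₀ c) (liftV v₀ b) :=
            SimpleGraph.edist_triangle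
        _ ≤ 1 + (dm c b : ℕ∞) :=
            add_le_add (adj_edist_le_one (lift_adj v₀ hc1)) (ih c b (by omega))
        _ ≤ (dm a b : ℕ∞) := by
            rw [add_comm]
            exact_mod_cast hc2

lemma HG_edist_inl_inr_le (v : V) (j : Fin 7) :
    (HG T).edist (Sum.inl v) (Sum.inr j) ≤ (dm 0 j.succ : ℕ∞) := by
  have := lift_edist_le (T := T) v (dm 0 j.succ) 0 j.succ le_rfl
  rwa [liftV_zero, liftV_succ] at this

lemma HG_edist_inr_inl_le (i : Fin 7) (v : V) :
    (HG T).edist (Sum.inr i) (Sum.inl v) ≤ (dm i.succ 0 : ℕ∞) := by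
  have := lift_edist_le (T := T) v (dm i.succ 0) i.succ 0 le_rfl
  rwa [liftV_zero, liftV_succ] at this

lemma HG_edist_inr_inr_le (v₀ : V) (i j : Fin 7) :
    (HG T).edist (Sum.inr i) (Sum.inr j) ≤ (dm i.succ j.succ : ℕ∞) := by
  have := lift_edist_le (T := T) v₀ (dm i.succ j.succ) i.succ j.succ le_rfl
  rwa [liftV_succ, liftV_succ] at this

lemma HG_adj_hub (u : V) : (HG T).Adj (Sum.inl u) (Sum.inr 0) := by
  show MG.Adj 0 (0 : Fin 7).succ
  decide

lemma HG_edist_inl_inl_le (u v : V) :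
    (HG T).edist (Sum.inl u) (Sum.inl v) ≤ 2 := by
  have h1 : (HG T).Adj (Sum.inl u) (Sum.inr 0) := HG_adj_hub u
  have h2 : (HG T).Adj (Sum.inr 0) (Sum.inl v) := (HG_adj_hub v).symm
  have hw : ((Walk.cons h1 (Walk.cons h2 Walk.nil)) : (HG T).Walk _ _).length = 2 := rfl
  have := SimpleGraph.edist_le (Walk.cons h1 (Walk.cons h2 Walk.nil))
  rw [hw] at this
  exact_mod_cast this

lemma HG_ecc_inl (v : V) : ecc (HG T) (Sum.inl v) = 3 := by
  refine le_antisymm ?_ ?_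
  · rw [ecc_le_iff]
    rintro (u|j)
    · exact (HG_edist_inl_inl_le v u).trans (by norm_num)
    · refine (HG_edist_inl_inr_le v j).trans ?_
      exact_mod_cast dm_zero_le j.succ
  · have h := HG_lb (T := T) (Sum.inl v) (Sum.inr (1 : Fin 7))
    have hdm : dm (fH (Sum.inl v : V ⊕ Fin 7)) (fH (Sum.inr (1 : Fin 7) : V ⊕ Fin 7)) = 3 := by
      show dm 0 (1 : Fin 7).succ = 3
      decide
    rw [hdm] at h
    calc (3 : ℕ∞) = ((3 : ℕ) : ℕ∞) := by norm_num
      _ ≤ (HG T).edist (Sum.inl v) (Sum.inr 1) := h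
      _ ≤ ecc (HG T) (Sum.inl v) := edist_le_ecc

lemma HG_ecc_inr [Nonempty V] (i : Fin 7) :
    ecc (HG T) (Sum.inr i) = (em i.succ : ℕ∞) := by
  obtain ⟨v₀⟩ := ‹Nonempty V›
  refine le_antisymm ?_ ?_
  · rw [ecc_le_iff]
    rintro (u|j)
    · exact (HG_edist_inr_inl_le i u).trans (by exact_mod_cast dm_le_em i.succ 0)
    · exact (HG_edist_inr_inr_le v₀ i j).trans (by exact_mod_cast dm_le_em i.succ j.succ)
  · obtain ⟨hwt1, hwt2⟩ := dm_wt i.succ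
    set b : Fin 8 := wt i.succ with hb
    set j : Fin 7 := b.pred hwt2 with hj
    have hjb : j.succ = b := Fin.succ_pred b hwt2
    have h := HG_lb (T := T) (Sum.inr i) (Sum.inr j)
    have hdm : dm (fH (Sum.inr i : V ⊕ Fin 7)) (fH (Sum.inr j : V ⊕ Fin 7)) = em i.succ := by
      show dm i.succ j.succ = em i.succ
      rw [hjb]
      exact hwt1
    rw [hdm] at h
    exact h.trans edist_le_ecc

lemma HG_radius [Nonempty V] : graphRadius (HG T) = (3 : ℕ∞) := by
  obtain ⟨v₀⟩ := ‹Nonempty V›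
  refine le_antisymm ?_ ?_
  · refine (radius_le_ecc (Sum.inl v₀)).trans ?_
    rw [HG_ecc_inl]
  · refine le_iInf ?_
    rintro (u|j)
    · rw [HG_ecc_inl]
    · rw [HG_ecc_inr]
      exact_mod_cast em_ge j.succ

lemma HG_connected [Nonempty V] (hT : T.Connected) : (HG T).Connected := by
  rw [connected_iff]
  refine ⟨?_, inferInstance⟩
  intro x y
  obtain ⟨v₀⟩ := ‹Nonempty V›
  have hfin : (HG T).edist x y ≠ ⊤ := by
    match x, y with
    | Sum.inl u, Sum.inl v =>
      exact ne_top_of_le_ne_top (by norm_num : (2 : ℕ∞) ≠ ⊤) (HG_edist_inl_inl_le u v)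
    | Sum.inl u, Sum.inr j =>
      exact ne_top_of_le_ne_top (ENat.coe_ne_top _) (HG_edist_inl_inr_le u j)
    | Sum.inr i, Sum.inl v =>
      exact ne_top_of_le_ne_top (ENat.coe_ne_top _) (HG_edist_inr_inl_le i v)
    | Sum.inr i, Sum.inr j =>
      exact ne_top_of_le_ne_top (ENat.coe_ne_top _) (HG_edist_inr_inr_le v₀ i j)
  exact reachable_of_edist_ne_top hfin

lemma HG_isASC [Nonempty V] (hT : T.Connected) : IsASC 3 (HG T) := by
  have hrad : graphRadius (HG T) = ((3 : ℕ) : ℕ∞) := by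
    rw [HG_radius]; norm_num
  refine ⟨HG_connected hT, hrad, ?_⟩
  have hset : {u : V ⊕ Fin 7 | ecc (HG T) u ≠ graphRadius (HG T)} =
      {Sum.inr (2 : Fin 7), Sum.inr (6 : Fin 7)} := by
    ext x
    rw [Set.mem_setOf_eq, HG_radius (T := T)]
    match x with
    | Sum.inl v =>
      simp only [HG_ecc_inl, ne_eq, not_true_eq_false, false_iff]
      simp
    | Sum.inr i =>
      rw [HG_ecc_inr]
      have hcast : ((em i.succ : ℕ) : ℕ∞) ≠ (3 : ℕ∞) ↔ em i.succ ≠ 3 := by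
        constructor
        · intro h h'; exact h (by rw [h']; norm_num)
        · intro h h'
          apply h
          have : ((em i.succ : ℕ) : ℕ∞) = ((3 : ℕ) : ℕ∞) := by rw [h']; norm_num
          exact_mod_cast this
      rw [hcast, em_ne_three i]
      constructor
      · rintro (h | h) <;> subst h <;> simp
      · intro h
        rcases h with h | h
        · left; exact Sum.inr_injective h
        · right; exact Sum.inr_injective h
  rw [hset]
  rw [Set.ncard_pair (by simp : (Sum.inr (2 : Fin 7) : V ⊕ Fin 7) ≠ Sum.inr (6 : Fin 7))]

lemma seven_mem (hT : T.Connected) [Nonempty V] :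
    7 ∈ {k : ℕ | ∃ H : SimpleGraph (V ⊕ Fin k), IsASC 3 H ∧
      ∀ u v : V, H.Adj (Sum.inl u) (Sum.inl v) ↔ T.Adj u v} :=
  ⟨HG T, HG_isASC hT, fun _ _ => Iff.rfl⟩

end Gadget

/-- If `T` is a tree of order `n ≥ 10` and diameter `n − 2`, then `θ_3(T) ≥ 2`. -/
theorem theta_three_tree_ge {V : Type*} [Fintype V] (T : SimpleGraph V) (n : ℕ)
    (hcard : Fintype.card V = n) (hn : 10 ≤ n)
    (hconn : T.Connected) (hacyclic : T.IsAcyclic)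
    (hdiam : graphDiam T = ((n - 2 : ℕ) : ℕ∞)) :
    2 ≤ theta 3 T := by
  have hVne : Nonempty V := Fintype.card_pos_iff.mp (by omega)
  set S : Set ℕ := {k : ℕ | ∃ H : SimpleGraph (V ⊕ Fin k), IsASC 3 H ∧
    ∀ u v : V, H.Adj (Sum.inl u) (Sum.inl v) ↔ T.Adj u v} with hS
  have h7 : 7 ∈ S := seven_mem hconn
  have hne : S.Nonempty := ⟨7, h7⟩
  have hmem : sInf S ∈ S := Nat.sInf_mem hne
  show 2 ≤ sInf S
  by_contra hlt
  push_neg at hlt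
  have h01 : sInf S = 0 ∨ sInf S = 1 := by omega
  rcases h01 with h0 | h1
  · rw [h0] at hmem
    exact no_zero hcard hn hdiam hmem
  · rw [h1] at hmem
    exact no_one hcard hn hconn hdiam hmem

end AscPaper
end
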